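/- For every element g of the first Grigorchuk group G and every integer n ≥ ⌈log₂ |g|_S⌉ + 1, all states g_v with v ∈ X_n lie in the nucleus N = {1, a, b, c, d}. -/

import Mathlib

noncomputable section

/-! ### The Grigorchuk generators -/

namespace Grig

def aFun : List Bool → List Bool
  | [] => []
  | x :: w => (!x) :: w

mutual
  def bFun : List Bool → List Bool
    | [] => []
    | false :: w => false :: aFun w
    | true :: w => true :: cFun w
  def cFun : List Bool → List Bool
    | [] => []
    | false :: w => false :: aFun w
    | true :: w => true :: dFun w
  def dFun : List Bool → List Bool
    | [] => []
    | false :: w => false :: w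
    | true :: w => true :: bFun w
end

theorem aFun_involutive : Function.Involutive aFun := by
  intro w
  match w with
  | [] => rfl
  | x :: w => simp [aFun]

theorem bcd_involutive :
    ∀ w : List Bool, bFun (bFun w) = w ∧ cFun (cFun w) = w ∧ dFun (dFun w) = w := by
  intro w
  induction w with
  | nil => exact ⟨rfl, rfl, rfl⟩
  | cons x w ih =>
    rcases x with _ | _
    · simp [bFun, cFun, dFun, aFun_involutive w]
    · simp [bFun, cFun, dFun, ih.1, ih.2.1, ih.2.2]

theorem bFun_involutive : Function.Involutive bFun := fun w => (bcd_involutive w).1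
theorem cFun_involutive : Function.Involutive cFun := fun w => (bcd_involutive w).2.1
theorem dFun_involutive : Function.Involutive dFun := fun w => (bcd_involutive w).2.2

theorem aFun_length : ∀ w : List Bool, (aFun w).length = w.length := by
  intro w
  match w with
  | [] => rfl
  | x :: w => simp [aFun]

theorem bcd_length : ∀ w : List Bool,
    (bFun w).length = w.length ∧ (cFun w).length = w.length ∧ (dFun w).length = w.length := by
  intro w
  induction w with
  | nil => exact ⟨rfl, rfl, rfl⟩
  | cons x w ih =>
    rcases x with _ | _
    · simp [bFun, cFun, dFun, aFun_length w]
    · simp [bFun, cFun, dFun, ih.1, ih.2.1, ih.2.2]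

theorem bFun_length : ∀ w, (bFun w).length = w.length := fun w => (bcd_length w).1
theorem cFun_length : ∀ w, (cFun w).length = w.length := fun w => (bcd_length w).2.1
theorem dFun_length : ∀ w, (dFun w).length = w.length := fun w => (bcd_length w).2.2

/-- The generators of the first Grigorchuk group as permutations of the vertex set
`{0,1}*` of the rooted binary tree. -/
def aPerm : Equiv.Perm (List Bool) := aFun_involutive.toPerm
def bPerm : Equiv.Perm (List Bool) := bFun_involutive.toPerm
def cPerm : Equiv.Perm (List Bool) := cFun_involutive.toPerm
def dPerm : Equiv.Perm (List Bool) := dFun_involutive.toPerm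

/-- The generating set `S = {a, b, c, d}` (a set of involutions). -/
def Sset : Set (Equiv.Perm (List Bool)) := {aPerm, bPerm, cPerm, dPerm}

/-- The first Grigorchuk group. -/
def Grigorchuk : Subgroup (Equiv.Perm (List Bool)) := Subgroup.closure Sset

/-- Word length with respect to `S = {a, b, c, d}`. -/
def wordLength (g : Equiv.Perm (List Bool)) : ℕ :=
  sInf {k | ∃ l : List (Equiv.Perm (List Bool)),
    (∀ x ∈ l, x ∈ Sset) ∧ l.length = k ∧ l.prod = g}

/-- The growth function of the first Grigorchuk group with respect to `S`. -/
def growthGrig (m : ℕ) : ℕ :=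
  Nat.card {g : Equiv.Perm (List Bool) |
    ∃ l : List (Equiv.Perm (List Bool)), (∀ x ∈ l, x ∈ Sset) ∧ l.length ≤ m ∧ l.prod = g}

/-! ### Level transfer -/

def levelFun (n : ℕ) (f : List Bool → List Bool) (v : Fin n → Bool) : Fin n → Bool :=
  fun i => (f (List.ofFn v)).getD i false

theorem levelFun_involutive (n : ℕ) (f : List Bool → List Bool)
    (hlen : ∀ l, (f l).length = l.length) (hinv : Function.Involutive f) :
    Function.Involutive (levelFun n f) := by
  intro v
  have key : ∀ u : Fin n → Bool, List.ofFn (levelFun n f u) = f (List.ofFn u) := by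
    intro u
    apply List.ext_getElem
    · simp [hlen]
    · intro i h1 h2
      simp only [List.getElem_ofFn]
      simp [levelFun, List.getD_eq_getElem, h2]
  funext i
  simp only [levelFun, key v, hinv (List.ofFn v)]
  simp [List.getD_eq_getElem]

/-- The images `a_n, b_n, c_n, d_n` of the Grigorchuk generators in `Sym(X_n)`,
where the `n`-th level `X_n = {0,1}^n` is identified with `Fin n → Bool`. -/
def aLev (n : ℕ) : Equiv.Perm (Fin n → Bool) :=
  (levelFun_involutive n aFun aFun_length aFun_involutive).toPerm
def bLev (n : ℕ) : Equiv.Perm (Fin n → Bool) :=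
  (levelFun_involutive n bFun bFun_length bFun_involutive).toPerm
def cLev (n : ℕ) : Equiv.Perm (Fin n → Bool) :=
  (levelFun_involutive n cFun cFun_length cFun_involutive).toPerm
def dLev (n : ℕ) : Equiv.Perm (Fin n → Bool) :=
  (levelFun_involutive n dFun dFun_length dFun_involutive).toPerm

end Grig

namespace GrigAux
open Grig

/-- letters -/
inductive Gen | A | B | C | D
deriving DecidableEq

def Gen.perm : Gen → Equiv.Perm (List Bool)
  | .A => aPerm | .B => bPerm | .C => cPerm | .D => dPerm

def P (l : List Gen) : Equiv.Perm (List Bool) := (l.map Gen.perm).prod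

theorem aPerm_apply (w) : aPerm w = aFun w := rfl
theorem bPerm_apply (w) : bPerm w = bFun w := rfl
theorem cPerm_apply (w) : cPerm w = cFun w := rfl
theorem dPerm_apply (w) : dPerm w = dFun w := rfl

theorem P_nil : P [] = 1 := rfl
theorem P_cons (s l) : P (s :: l) = s.perm * P l := by simp [P]

theorem P_fix_nil : ∀ l : List Gen, P l [] = [] := by
  intro l
  induction l with
  | nil => rfl
  | cons s l ih =>
    rw [P_cons, Equiv.Perm.mul_apply, ih]
    cases s <;> rfl

/-- triple of function identities, first cycle -/
theorem bcd_mul1 : ∀ w : List Bool,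
    bFun (cFun w) = dFun w ∧ cFun (dFun w) = bFun w ∧ dFun (bFun w) = cFun w := by
  intro w
  induction w with
  | nil => exact ⟨rfl, rfl, rfl⟩
  | cons x w ih =>
    rcases x with _ | _
    · simp [bFun, cFun, dFun, aFun_involutive w]
    · simp [bFun, cFun, dFun, ih.1, ih.2.1, ih.2.2]

theorem bcd_mul2 : ∀ w : List Bool,
    cFun (bFun w) = dFun w ∧ dFun (cFun w) = bFun w ∧ bFun (dFun w) = cFun w := by
  intro w
  induction w with
  | nil => exact ⟨rfl, rfl, rfl⟩
  | cons x w ih =>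
    rcases x with _ | _
    · simp [bFun, cFun, dFun, aFun_involutive w]
    · simp [bFun, cFun, dFun, ih.1, ih.2.1, ih.2.2]

theorem pa2 : aPerm * aPerm = 1 := Equiv.ext fun w => aFun_involutive w
theorem pb2 : bPerm * bPerm = 1 := Equiv.ext fun w => bFun_involutive w
theorem pc2 : cPerm * cPerm = 1 := Equiv.ext fun w => cFun_involutive w
theorem pd2 : dPerm * dPerm = 1 := Equiv.ext fun w => dFun_involutive w
theorem pbc : bPerm * cPerm = dPerm := Equiv.ext fun w => (bcd_mul1 w).1
theorem pcd : cPerm * dPerm = bPerm := Equiv.ext fun w => (bcd_mul1 w).2.1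
theorem pdb : dPerm * bPerm = cPerm := Equiv.ext fun w => (bcd_mul1 w).2.2
theorem pcb : cPerm * bPerm = dPerm := Equiv.ext fun w => (bcd_mul2 w).1
theorem pdc : dPerm * cPerm = bPerm := Equiv.ext fun w => (bcd_mul2 w).2.1
theorem pbd : bPerm * dPerm = cPerm := Equiv.ext fun w => (bcd_mul2 w).2.2

/-- reduction: cons with cancellation -/
def rcons : Gen → List Gen → List Gen
  | s, [] => [s]
  | .A, .A :: l => l
  | .B, .B :: l => l
  | .C, .C :: l => l
  | .D, .D :: l => l
  | .B, .C :: l => .D :: l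
  | .C, .B :: l => .D :: l
  | .C, .D :: l => .B :: l
  | .D, .C :: l => .B :: l
  | .D, .B :: l => .C :: l
  | .B, .D :: l => .C :: l
  | s, t :: l => s :: t :: l

def red : List Gen → List Gen := List.foldr rcons []

def R (s t : Gen) : Prop := (s = Gen.A) ↔ (t ≠ Gen.A)

def Alt : List Gen → Prop := List.IsChain R

/-- count of non-A letters -/
def cnt : List Gen → ℕ
  | [] => 0
  | .A :: l => cnt l
  | _ :: l => cnt l + 1

theorem P_rcons (s : Gen) (l : List Gen) : P (rcons s l) = s.perm * P l := by
  match l with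
  | [] => simp [rcons, P_cons, P_nil]
  | t :: l =>
    cases s <;> cases t <;>
      simp [rcons, P_cons, Gen.perm, ← mul_assoc, pa2, pb2, pc2, pd2,
        pbc, pcd, pdb, pcb, pdc, pbd]

theorem len_rcons (s : Gen) (l : List Gen) : (rcons s l).length ≤ l.length + 1 := by
  match l with
  | [] => simp [rcons]
  | t :: l => cases s <;> cases t <;> simp [rcons] <;> omega

theorem alt_rcons (s : Gen) (l : List Gen) (h : Alt l) : Alt (rcons s l) := by
  match l with
  | [] => cases s <;> simp [rcons, Alt, List.isChain_singleton]
  | [t] =>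
    cases s <;> cases t <;>
      simp_all [rcons, Alt, List.isChain_cons_cons, R] <;> decide
  | t :: x :: l =>
    have h1 : R t x := (List.isChain_cons_cons.1 h).1
    have h2 : List.IsChain R (x :: l) := (List.isChain_cons_cons.1 h).2
    cases s <;> cases t <;> cases x <;>
      simp_all [rcons, Alt, List.isChain_cons_cons, R] <;> tauto

theorem P_red (l : List Gen) : P (red l) = P l := by
  induction l with
  | nil => rfl
  | cons s l ih => rw [red, List.foldr_cons, P_rcons, P_cons, ← red, ih]

theorem len_red (l : List Gen) : (red l).length ≤ l.length := by
  induction l with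
  | nil => simp [red]
  | cons s l ih =>
    have := len_rcons s (red l)
    simp only [red, List.foldr_cons] at *
    simp only [List.length_cons]
    omega

theorem alt_red (l : List Gen) : Alt (red l) := by
  induction l with
  | nil => exact List.isChain_nil
  | cons s l ih => exact alt_rcons s (red l) ih

theorem alt_cnt : ∀ l : List Gen, Alt l → 2 * cnt l ≤ l.length + 1
  | [], _ => by simp [cnt]
  | [s], _ => by cases s <;> simp [cnt]
  | s :: t :: l, h => by
    have h1 : R s t := (List.isChain_cons_cons.1 h).1
    have h2 : Alt l := ((List.isChain_cons_cons.1 h).2).tail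
    have := alt_cnt l h2
    cases s <;> cases t <;> simp_all [cnt, R] <;> omega

/-- first-level states: (word for state at false, word for state at true, does it swap) -/
def st : List Gen → List Gen × List Gen × Bool
  | [] => ([], [], false)
  | .A :: l => ((st l).1, (st l).2.1, !(st l).2.2)
  | .B :: l =>
      if (st l).2.2 then (.C :: (st l).1, .A :: (st l).2.1, true)
      else (.A :: (st l).1, .C :: (st l).2.1, false)
  | .C :: l =>
      if (st l).2.2 then (.D :: (st l).1, .A :: (st l).2.1, true)
      else (.A :: (st l).1, .D :: (st l).2.1, false)
  | .D :: l =>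
      if (st l).2.2 then (.B :: (st l).1, (st l).2.1, true)
      else ((st l).1, .B :: (st l).2.1, false)

theorem st_len : ∀ l : List Gen, (st l).1.length ≤ cnt l ∧ (st l).2.1.length ≤ cnt l := by
  intro l
  induction l with
  | nil => simp [st, cnt]
  | cons s l ih =>
    cases s <;> rcases h : (st l).2.2 <;>
      simp_all [st, cnt] <;> omega

theorem st_spec : ∀ (l : List Gen) (x : Bool) (w : List Bool),
    P l (x :: w) = (xor x (st l).2.2) :: P (cond x (st l).2.1 (st l).1) w := by
  intro l
  induction l with
  | nil => intro x w; simp [st, P_nil]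
  | cons s l ih =>
    intro x w
    rw [P_cons, Equiv.Perm.mul_apply, ih x w]
    cases s <;> rcases h : (st l).2.2 <;> cases x <;>
      simp_all [st, Gen.perm, aPerm_apply, bPerm_apply, cPerm_apply, dPerm_apply,
        aFun, bFun, cFun, dFun, P_cons]

def Nuc : Set (Equiv.Perm (List Bool)) := {1, aPerm, bPerm, cPerm, dPerm}

theorem main : ∀ (n : ℕ) (l : List Gen) (v : List Bool), v.length = n → l.length ≤ 2 ^ n →
    ∃ h ∈ Nuc, ∀ w : List Bool, P l (v ++ w) = P l v ++ h w := by
  intro n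
  induction n with
  | zero =>
    intro l v hv hl
    rw [List.length_eq_zero_iff] at hv
    subst hv
    refine ⟨P l, ?_, fun w => by rw [List.nil_append, P_fix_nil, List.nil_append]⟩
    match l, hl with
    | [], _ => exact Or.inl rfl
    | [s], _ =>
      have : P [s] = s.perm := by simp [P]
      rw [this]
      cases s <;> simp [Nuc, Gen.perm]
  | succ n ih =>
    intro l v hv hl
    match v, hv with
    | x :: v', hv =>
      have hv' : v'.length = n := by simpa using hv
      set r := red l with hr
      set wx : List Gen := cond x (st r).2.1 (st r).1 with hwx
      have hcnt : 2 * cnt r ≤ r.length + 1 := alt_cnt r (alt_red l)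
      have hrl : r.length ≤ l.length := len_red l
      have hwlen : wx.length ≤ 2 ^ n := by
        have h1 := st_len r
        have h2 : 2 ^ (n + 1) = 2 * 2 ^ n := by ring
        have : wx.length ≤ cnt r := by cases x <;> simp [hwx, h1.1, h1.2]
        omega
      obtain ⟨h, hmem, hst⟩ := ih wx v' hv' hwlen
      refine ⟨h, hmem, fun w => ?_⟩
      have key : ∀ u, P l (x :: u) = (xor x (st r).2.2) :: P wx u := by
        intro u
        rw [← P_red l, st_spec r x u]
      rw [List.cons_append, key (v' ++ w), hst w, key v', List.cons_append]

theorem sset_gen : ∀ p ∈ Sset, ∃ s : Gen, s.perm = p := by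
  intro p hp
  rcases hp with h | h | h | h
  exacts [⟨.A, h.symm⟩, ⟨.B, h.symm⟩, ⟨.C, h.symm⟩, ⟨.D, h.symm⟩]

theorem sset_inv : ∀ p ∈ Sset, p⁻¹ = p := by
  intro p hp
  obtain ⟨s, rfl⟩ := sset_gen p hp
  cases s <;>
    simp only [Gen.perm] <;>
    exact Equiv.ext fun w => rfl

theorem exists_word (g : Equiv.Perm (List Bool)) (hg : g ∈ Grigorchuk) :
    ∃ l : List (Equiv.Perm (List Bool)), (∀ x ∈ l, x ∈ Sset) ∧ l.prod = g := by
  have h1 : g ∈ Submonoid.closure (Sset ∪ Sset⁻¹) := by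
    rw [← Subgroup.closure_toSubmonoid]
    exact hg
  obtain ⟨l, hl, hp⟩ := Submonoid.exists_list_of_mem_closure h1
  refine ⟨l, fun x hx => ?_, hp⟩
  rcases hl x hx with h | h
  · exact h
  · have h2 : x⁻¹ ∈ Sset := h
    have h3 := sset_inv _ h2
    rw [inv_inv] at h3
    rw [h3]
    exact h2

theorem exists_min_word (g : Equiv.Perm (List Bool)) (hg : g ∈ Grigorchuk) :
    ∃ l : List (Equiv.Perm (List Bool)),
      (∀ x ∈ l, x ∈ Sset) ∧ l.length = wordLength g ∧ l.prod = g := by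
  obtain ⟨l, hl, hp⟩ := exists_word g hg
  have hne : {k | ∃ l : List (Equiv.Perm (List Bool)),
      (∀ x ∈ l, x ∈ Sset) ∧ l.length = k ∧ l.prod = g}.Nonempty :=
    ⟨l.length, l, hl, rfl, hp⟩
  exact Nat.sInf_mem hne

theorem toGenList (l : List (Equiv.Perm (List Bool))) (hl : ∀ x ∈ l, x ∈ Sset) :
    ∃ lg : List Gen, lg.map Gen.perm = l := by
  induction l with
  | nil => exact ⟨[], rfl⟩
  | cons p l ih =>
    obtain ⟨lg, hlg⟩ := ih fun x hx => hl x (List.mem_cons_of_mem _ hx)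
    obtain ⟨s, hs⟩ := sset_gen p (hl p List.mem_cons_self)
    exact ⟨s :: lg, by simp [hlg, hs]⟩

end GrigAux

/-- **The contracting property of the first Grigorchuk group:** for every `g ∈ 𝒢` and
every `n ≥ ⌈log₂ |g|_S⌉ + 1`, all states `g_v` with `v ∈ X_n` lie in the nucleus
`N = {1, a, b, c, d}`.  Here the state of `g` at `v` is the unique automorphism `h`
with `g(vw) = g(v) h(w)` for all words `w`. -/
theorem grigorchuk_nucleus_states (g : Equiv.Perm (List Bool)) (hg : g ∈ Grig.Grigorchuk)
    (n : ℕ) (hn : Nat.clog 2 (Grig.wordLength g) + 1 ≤ n)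
    (v : List Bool) (hv : v.length = n) :
    ∃ h ∈ ({1, Grig.aPerm, Grig.bPerm, Grig.cPerm, Grig.dPerm} :
        Set (Equiv.Perm (List Bool))),
      ∀ w : List Bool, g (v ++ w) = g v ++ h w := by
  obtain ⟨l, hl, hlen, hp⟩ := GrigAux.exists_min_word g hg
  obtain ⟨lg, hlg⟩ := GrigAux.toGenList l hl
  have hPg : GrigAux.P lg = g := by rw [GrigAux.P, hlg, hp]
  have hln : lg.length ≤ 2 ^ n := by
    have hlglen : lg.length = Grig.wordLength g := by
      rw [← hlen, ← hlg, List.length_map]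
    rcases Nat.eq_zero_or_pos (Grig.wordLength g) with h0 | h0
    · rw [hlglen, h0]; positivity
    · calc lg.length = Grig.wordLength g := hlglen
        _ ≤ 2 ^ Nat.clog 2 (Grig.wordLength g) := Nat.le_pow_clog one_lt_two _
        _ ≤ 2 ^ n := Nat.pow_le_pow_right (by norm_num) (by omega)
  obtain ⟨h, hmem, hst⟩ := GrigAux.main n lg v hv hln
  exact ⟨h, hmem, fun w => by rw [← hPg]; exact hst w⟩

end
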